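/- Let u₁, u₂, u₃ ∈ V be distinct nonzero vectors spanning a 1-dimensional subspace, and T = {0, u₁, u₂, u₃}. Then the numbers a_i of non-constant codewords of RM_q(1,m) with exactly i nonzero values on T are: a₀ = q^{m-1} − 1, a₁ = 0, a₂ = 0, a₃ = 4(q−1)q^{m-1}, a₄ = (q−1)(q^m − 3q^{m-1} − 1). -/
import Mathlib



section cnt
variable {F : Type} [Field F]

open Classical in
/-- number of nonzero values among b, s+b, t₂s+b, t₃s+b -/
noncomputable def cnt (t₂ t₃ s b : F) : ℕ :=
  (if b = 0 then 0 else 1) + ((if s + b = 0 then 0 else 1) +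
    ((if t₂ * s + b = 0 then 0 else 1) + (if t₃ * s + b = 0 then 0 else 1)))

/-- the "bad" b's giving a zero value, for s ≠ 0 -/
def Bad (t₂ t₃ s b : F) : Prop := b = 0 ∨ b = -s ∨ b = -(t₂ * s) ∨ b = -(t₃ * s)

lemma cnt_s0_ne {t₂ t₃ b : F} (hb : b ≠ 0) : cnt t₂ t₃ 0 b = 4 := by
  simp [cnt, hb]

lemma cnt_s0_eq (t₂ t₃ : F) : cnt t₂ t₃ 0 (0:F) = 0 := by
  simp [cnt]

lemma cnt_of_bad {t₂ t₃ s b : F} (h20 : t₂ ≠ 0) (h21 : t₂ ≠ 1) (h30 : t₃ ≠ 0)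
    (h31 : t₃ ≠ 1) (h23 : t₂ ≠ t₃) (hs : s ≠ 0) (hb : Bad t₂ t₃ s b) :
    cnt t₂ t₃ s b = 3 := by
  rcases hb with rfl | rfl | rfl | rfl
  · have c2 : s + 0 ≠ 0 := by simpa using hs
    have c3 : t₂ * s + 0 ≠ 0 := by simpa using mul_ne_zero h20 hs
    have c4 : t₃ * s + 0 ≠ 0 := by simpa using mul_ne_zero h30 hs
    rw [cnt, if_pos rfl, if_neg c2, if_neg c3, if_neg c4]
  · have c1 : -s ≠ 0 := neg_ne_zero.mpr hs
    have c2 : s + -s = 0 := by ring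
    have c3 : t₂ * s + -s ≠ 0 := fun h =>
      (mul_ne_zero (sub_ne_zero.mpr h21) hs) (by linear_combination h)
    have c4 : t₃ * s + -s ≠ 0 := fun h =>
      (mul_ne_zero (sub_ne_zero.mpr h31) hs) (by linear_combination h)
    rw [cnt, if_neg c1, if_pos c2, if_neg c3, if_neg c4]
  · have c1 : -(t₂ * s) ≠ 0 := neg_ne_zero.mpr (mul_ne_zero h20 hs)
    have c2 : s + -(t₂ * s) ≠ 0 := fun h =>
      (mul_ne_zero (sub_ne_zero.mpr (Ne.symm h21)) hs) (by linear_combination h)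
    have c3 : t₂ * s + -(t₂ * s) = 0 := by ring
    have c4 : t₃ * s + -(t₂ * s) ≠ 0 := fun h =>
      (mul_ne_zero (sub_ne_zero.mpr (Ne.symm h23)) hs) (by linear_combination h)
    rw [cnt, if_neg c1, if_neg c2, if_pos c3, if_neg c4]
  · have c1 : -(t₃ * s) ≠ 0 := neg_ne_zero.mpr (mul_ne_zero h30 hs)
    have c2 : s + -(t₃ * s) ≠ 0 := fun h =>
      (mul_ne_zero (sub_ne_zero.mpr (Ne.symm h31)) hs) (by linear_combination h)
    have c3 : t₂ * s + -(t₃ * s) ≠ 0 := fun h =>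
      (mul_ne_zero (sub_ne_zero.mpr h23) hs) (by linear_combination h)
    have c4 : t₃ * s + -(t₃ * s) = 0 := by ring
    rw [cnt, if_neg c1, if_neg c2, if_neg c3, if_pos c4]

lemma cnt_of_not_bad {t₂ t₃ s b : F} (hb : ¬ Bad t₂ t₃ s b) : cnt t₂ t₃ s b = 4 := by
  simp only [Bad, not_or] at hb
  obtain ⟨h1, h2, h3, h4⟩ := hb
  have c2 : s + b ≠ 0 := fun h => h2 (by linear_combination h)
  have c3 : t₂ * s + b ≠ 0 := fun h => h3 (by linear_combination h)
  have c4 : t₃ * s + b ≠ 0 := fun h => h4 (by linear_combination h)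
  rw [cnt, if_neg h1, if_neg c2, if_neg c3, if_neg c4]

variable {t₂ t₃ s b : F} (h20 : t₂ ≠ 0) (h21 : t₂ ≠ 1) (h30 : t₃ ≠ 0)
    (h31 : t₃ ≠ 1) (h23 : t₂ ≠ t₃)
include h20 h21 h30 h31 h23

lemma cnt_eq_zero_iff : cnt t₂ t₃ s b = 0 ↔ s = 0 ∧ b = 0 := by
  constructor
  · intro h
    rcases eq_or_ne s 0 with rfl | hs
    · rcases eq_or_ne b 0 with rfl | hb
      · exact ⟨rfl, rfl⟩
      · rw [cnt_s0_ne hb] at h; omega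
    · rcases Classical.em (Bad t₂ t₃ s b) with hb | hb
      · rw [cnt_of_bad h20 h21 h30 h31 h23 hs hb] at h; omega
      · rw [cnt_of_not_bad hb] at h; omega
  · rintro ⟨rfl, rfl⟩; exact cnt_s0_eq t₂ t₃

lemma cnt_ne_one_two : cnt t₂ t₃ s b ≠ 1 ∧ cnt t₂ t₃ s b ≠ 2 := by
  rcases eq_or_ne s 0 with rfl | hs
  · rcases eq_or_ne b 0 with rfl | hb
    · rw [cnt_s0_eq]; omega
    · rw [cnt_s0_ne hb]; omega
  · rcases Classical.em (Bad t₂ t₃ s b) with hb | hb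
    · rw [cnt_of_bad h20 h21 h30 h31 h23 hs hb]; omega
    · rw [cnt_of_not_bad hb]; omega

lemma cnt_eq_three_iff : cnt t₂ t₃ s b = 3 ↔ s ≠ 0 ∧ Bad t₂ t₃ s b := by
  constructor
  · intro h
    rcases eq_or_ne s 0 with rfl | hs
    · rcases eq_or_ne b 0 with rfl | hb
      · rw [cnt_s0_eq] at h; omega
      · rw [cnt_s0_ne hb] at h; omega
    · rcases Classical.em (Bad t₂ t₃ s b) with hb | hb
      · exact ⟨hs, hb⟩
      · rw [cnt_of_not_bad hb] at h; omega
  · rintro ⟨hs, hb⟩; exact cnt_of_bad h20 h21 h30 h31 h23 hs hb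

lemma cnt_eq_four_iff :
    cnt t₂ t₃ s b = 4 ↔ ((s = 0 ∧ b ≠ 0) ∨ (s ≠ 0 ∧ ¬ Bad t₂ t₃ s b)) := by
  constructor
  · intro h
    rcases eq_or_ne s 0 with rfl | hs
    · rcases eq_or_ne b 0 with rfl | hb
      · rw [cnt_s0_eq] at h; omega
      · exact Or.inl ⟨rfl, hb⟩
    · rcases Classical.em (Bad t₂ t₃ s b) with hb | hb
      · rw [cnt_of_bad h20 h21 h30 h31 h23 hs hb] at h; omega
      · exact Or.inr ⟨hs, hb⟩
  · rintro (⟨rfl, hb⟩ | ⟨hs, hb⟩)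
    · exact cnt_s0_ne hb
    · exact cnt_of_not_bad hb

end cnt


section helpers

universe u v

lemma natCard_subtype_ne {α : Type u} [Finite α] (a : α) :
    Nat.card {x : α // x ≠ a} = Nat.card α - 1 := by
  classical
  cases nonempty_fintype α
  rw [Nat.card_eq_fintype_card, Nat.card_eq_fintype_card]
  exact (Fintype.card_subtype_compl (· = a)).trans (by rw [Fintype.card_subtype_eq])

/-- fix the first component of a product subtype -/
def fixFstEquiv {α : Type u} {β : Type v} (a : α) (P : β → Prop) :
    {p : α × β // p.1 = a ∧ P p.2} ≃ {b // P b} where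
  toFun p := ⟨p.1.2, p.2.2⟩
  invFun b := ⟨(a, b.1), rfl, b.2⟩
  left_inv p := Subtype.ext (Prod.ext p.2.1.symm rfl)
  right_inv b := rfl

open Classical in
/-- splitting a subtype of a product along a disjunction -/
noncomputable def splitEquiv {γ : Type u} {κ : Type v} (A B : γ → Prop) (P : κ → Prop)
    (hdisj : ∀ g, A g → B g → False) :
    {q : γ × κ // (A q.1 ∧ P q.2) ∨ B q.1} ≃
      ({g // A g} × {k // P k}) ⊕ ({g // B g} × κ) where
  toFun q :=
    if h : B q.1.1 then Sum.inr (⟨q.1.1, h⟩, q.1.2)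
    else Sum.inl (⟨q.1.1, (q.2.resolve_right h).1⟩, ⟨q.1.2, (q.2.resolve_right h).2⟩)
  invFun x := x.elim (fun gk => ⟨(gk.1.1, gk.2.1), Or.inl ⟨gk.1.2, gk.2.2⟩⟩)
    (fun gk => ⟨(gk.1.1, gk.2), Or.inr gk.1.2⟩)
  left_inv q := by
    rcases q with ⟨⟨g, k⟩, hq⟩
    dsimp only
    split_ifs <;> rfl
  right_inv x := by
    rcases x with ⟨g, k⟩ | ⟨g, k⟩ <;> dsimp only [Sum.elim_inl, Sum.elim_inr]
    · rw [dif_neg (fun h => hdisj _ g.2 h)]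
    · rw [dif_pos g.2]

end helpers

section badcount
variable {F : Type} [Field F] {t₂ t₃ s : F} (h20 : t₂ ≠ 0) (h21 : t₂ ≠ 1) (h30 : t₃ ≠ 0)
    (h31 : t₃ ≠ 1) (h23 : t₂ ≠ t₃)
include h20 h21 h30 h31 h23

lemma badFinset_card [DecidableEq F] (hs : s ≠ 0) :
    ({0, -s, -(t₂ * s), -(t₃ * s)} : Finset F).card = 4 := by
  have m1 : (-(t₂ * s) : F) ∉ ({-(t₃ * s)} : Finset F) := by
    simp only [Finset.mem_singleton]
    intro h; exact (mul_ne_zero (sub_ne_zero.mpr h23) hs) (by linear_combination -h)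
  have m2 : (-s : F) ∉ ({-(t₂ * s), -(t₃ * s)} : Finset F) := by
    simp only [Finset.mem_insert, Finset.mem_singleton]
    push_neg
    constructor
    · intro h; exact (mul_ne_zero (sub_ne_zero.mpr h21) hs) (by linear_combination h)
    · intro h; exact (mul_ne_zero (sub_ne_zero.mpr h31) hs) (by linear_combination h)
  have m3 : (0 : F) ∉ ({-s, -(t₂ * s), -(t₃ * s)} : Finset F) := by
    simp only [Finset.mem_insert, Finset.mem_singleton]
    push_neg
    refine ⟨fun h => hs (by linear_combination h), fun h =>
      (mul_ne_zero h20 hs) (by linear_combination h), fun h =>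
      (mul_ne_zero h30 hs) (by linear_combination h)⟩
  rw [Finset.card_insert_of_notMem m3, Finset.card_insert_of_notMem m2,
    Finset.card_insert_of_notMem m1, Finset.card_singleton]

variable [Fintype F]

lemma card_bad_pair :
    Nat.card {p : F × F // p.1 ≠ 0 ∧ Bad t₂ t₃ p.1 p.2} = 4 * (Fintype.card F - 1) := by
  classical
  rw [Nat.card_eq_fintype_card,
    Fintype.card_congr (Equiv.subtypeProdEquivSigmaSubtype (fun s b => s ≠ 0 ∧ Bad t₂ t₃ s b)),
    Fintype.card_sigma]
  have step : ∀ s : F, Fintype.card {b // s ≠ 0 ∧ Bad t₂ t₃ s b} = if s = 0 then 0 else 4 := by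
    intro s
    split_ifs with h
    · exact Fintype.card_eq_zero_iff.mpr ⟨fun b => b.2.1 h⟩
    · rw [Fintype.card_subtype]
      have hf : Finset.univ.filter (fun b => s ≠ 0 ∧ Bad t₂ t₃ s b)
          = ({0, -s, -(t₂ * s), -(t₃ * s)} : Finset F) := by
        ext b
        simp [h, Bad]
      rw [hf, badFinset_card h20 h21 h30 h31 h23 h]
  rw [Finset.sum_congr rfl fun s _ => step s, Finset.sum_ite, Finset.sum_const_zero,
    Finset.sum_const, zero_add, smul_eq_mul]
  have : Finset.univ.filter (fun s : F => ¬ s = 0) = Finset.univ.erase 0 := by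
    ext a; simp [Finset.mem_erase]
  rw [this, Finset.card_erase_of_mem (Finset.mem_univ 0), Finset.card_univ, Nat.mul_comm]

lemma card_nbad_pair :
    Nat.card {p : F × F // p.1 ≠ 0 ∧ ¬ Bad t₂ t₃ p.1 p.2}
      = (Fintype.card F - 4) * (Fintype.card F - 1) := by
  classical
  rw [Nat.card_eq_fintype_card,
    Fintype.card_congr (Equiv.subtypeProdEquivSigmaSubtype (fun s b => s ≠ 0 ∧ ¬ Bad t₂ t₃ s b)),
    Fintype.card_sigma]
  have step : ∀ s : F, Fintype.card {b // s ≠ 0 ∧ ¬ Bad t₂ t₃ s b}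
      = if s = 0 then 0 else Fintype.card F - 4 := by
    intro s
    split_ifs with h
    · exact Fintype.card_eq_zero_iff.mpr ⟨fun b => b.2.1 h⟩
    · rw [Fintype.card_subtype]
      have hf : Finset.univ.filter (fun b => s ≠ 0 ∧ ¬ Bad t₂ t₃ s b)
          = Finset.univ \ ({0, -s, -(t₂ * s), -(t₃ * s)} : Finset F) := by
        ext b
        simp [h, Bad]
      rw [hf, Finset.card_sdiff_of_subset (Finset.subset_univ _), Finset.card_univ,
        badFinset_card h20 h21 h30 h31 h23 h]
  rw [Finset.sum_congr rfl fun s _ => step s, Finset.sum_ite, Finset.sum_const_zero,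
    Finset.sum_const, zero_add, smul_eq_mul]
  have : Finset.univ.filter (fun s : F => ¬ s = 0) = Finset.univ.erase 0 := by
    ext a; simp [Finset.mem_erase]
  rw [this, Finset.card_erase_of_mem (Finset.mem_univ 0), Finset.card_univ, Nat.mul_comm]

end badcount

section dual
variable {F : Type} [Field F] {m : ℕ}

/-- decomposition of dual pairs along evaluation at `u₁` -/
noncomputable def dualEquiv (u₁ : Fin m → F) (l₀ : (Fin m → F) →ₗ[F] F) (hl₀ : l₀ u₁ = 1) :
    ((Fin m → F) →ₗ[F] F) × F ≃ (F × F) × {l : (Fin m → F) →ₗ[F] F // l u₁ = 0} where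
  toFun p := ((p.1 u₁, p.2), ⟨p.1 - p.1 u₁ • l₀, by
    simp [LinearMap.sub_apply, LinearMap.smul_apply, hl₀, smul_eq_mul]⟩)
  invFun q := (q.1.1 • l₀ + q.2.1, q.1.2)
  left_inv p := by
    refine Prod.ext ?_ rfl
    dsimp only
    module
  right_inv q := by
    obtain ⟨⟨s, b⟩, k⟩ := q
    have hv : (s • l₀ + k.1) u₁ = s := by
      simp [LinearMap.add_apply, LinearMap.smul_apply, hl₀, k.2, smul_eq_mul]
    refine Prod.ext (Prod.ext ?_ rfl) (Subtype.ext ?_) <;> dsimp only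
    · exact hv
    · rw [hv]; module

end dual

/-- Counts of non-constant codewords of `RM_q(1,m)` by number of nonzero values on
`T = {0, u₁, u₂, u₃}` with `u₁, u₂, u₃` distinct nonzero vectors spanning a line. -/
theorem stmt_13 (F : Type) [Field F] [Fintype F] (q m : ℕ) (hq : q = Fintype.card F)
    (hq4 : 4 ≤ q) (hm : 1 ≤ m) (u₁ u₂ u₃ : Fin m → F)
    (hu₁ : u₁ ≠ 0) (hu₂ : u₂ ≠ 0) (hu₃ : u₃ ≠ 0)
    (h12 : u₁ ≠ u₂) (h13 : u₁ ≠ u₃) (h23 : u₂ ≠ u₃)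
    (t₂ t₃ : F) (ht₂ : u₂ = t₂ • u₁) (ht₃ : u₃ = t₃ • u₁)
    (T : Set (Fin m → F)) (hT : T = {0, u₁, u₂, u₃})
    (NC : Set ((Fin m → F) → F))
    (hNC : NC = {c | ∃ (l : (Fin m → F) →ₗ[F] F), l ≠ 0 ∧ ∃ b : F, c = fun x => l x + b}) :
    {c ∈ NC | {x ∈ T | c x ≠ 0}.ncard = 0}.ncard = q ^ (m - 1) - 1 ∧
    {c ∈ NC | {x ∈ T | c x ≠ 0}.ncard = 1}.ncard = 0 ∧
    {c ∈ NC | {x ∈ T | c x ≠ 0}.ncard = 2}.ncard = 0 ∧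
    {c ∈ NC | {x ∈ T | c x ≠ 0}.ncard = 3}.ncard = 4 * (q - 1) * q ^ (m - 1) ∧
    {c ∈ NC | {x ∈ T | c x ≠ 0}.ncard = 4}.ncard
      = (q - 1) * (q ^ m - 3 * q ^ (m - 1) - 1) := by
  classical
  have h20 : t₂ ≠ 0 := fun h => hu₂ (by rw [ht₂, h, zero_smul])
  have h21 : t₂ ≠ 1 := fun h => h12 (by rw [ht₂, h, one_smul])
  have h30 : t₃ ≠ 0 := fun h => hu₃ (by rw [ht₃, h, zero_smul])
  have h31 : t₃ ≠ 1 := fun h => h13 (by rw [ht₃, h, one_smul])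
  have h23' : t₂ ≠ t₃ := fun h => h23 (by rw [ht₂, ht₃, h])
  obtain ⟨i0, hi0⟩ : ∃ i, u₁ i ≠ 0 := by
    by_contra h
    push_neg at h
    exact hu₁ (funext h)
  haveI : Finite ((Fin m → F) →ₗ[F] F) :=
    Finite.of_equiv _ (LinearEquiv.piRing F F (Fin m) F).toEquiv.symm
  have cardD : Nat.card ((Fin m → F) →ₗ[F] F) = Fintype.card F ^ m := by
    rw [Nat.card_congr (LinearEquiv.piRing F F (Fin m) F).toEquiv, Nat.card_eq_fintype_card,
      Fintype.card_fun, Fintype.card_fin]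
  set l₀ : (Fin m → F) →ₗ[F] F := (u₁ i0)⁻¹ • LinearMap.proj i0 with hl₀def
  have hl₀ : l₀ u₁ = 1 := by
    simp [hl₀def, LinearMap.proj_apply, inv_mul_cancel₀ hi0]
  -- counting values on T
  have key : ∀ (l : (Fin m → F) →ₗ[F] F) (b : F),
      {x ∈ T | (fun x => l x + b) x ≠ 0}.ncard = cnt t₂ t₃ (l u₁) b := by
    intro l b
    have hset : {x ∈ T | (fun x => l x + b) x ≠ 0}
        = ↑(({0, u₁, u₂, u₃} : Finset (Fin m → F)).filter (fun x => l x + b ≠ 0)) := by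
      rw [hT]; ext x; simp
    rw [hset, Set.ncard_coe_finset, Finset.card_filter]
    have n0 : (0 : Fin m → F) ∉ ({u₁, u₂, u₃} : Finset (Fin m → F)) := by
      simp [Ne.symm hu₁, Ne.symm hu₂, Ne.symm hu₃]
    have n1 : u₁ ∉ ({u₂, u₃} : Finset (Fin m → F)) := by simp [h12, h13]
    have n2 : u₂ ∉ ({u₃} : Finset (Fin m → F)) := by simp [h23]
    rw [show ({0, u₁, u₂, u₃} : Finset (Fin m → F))
        = insert 0 (insert u₁ (insert u₂ ({u₃} : Finset (Fin m → F)))) from rfl,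
      Finset.sum_insert n0, Finset.sum_insert n1, Finset.sum_insert n2,
      Finset.sum_singleton, map_zero, zero_add, ht₂, ht₃, map_smul, map_smul,
      smul_eq_mul, smul_eq_mul, cnt]
    simp only [ne_eq, ite_not]
  -- parametrization of codewords
  have he : Function.Injective
      (fun p : ((Fin m → F) →ₗ[F] F) × F => (fun x => p.1 x + p.2 : (Fin m → F) → F)) := by
    rintro ⟨l, b⟩ ⟨l', b'⟩ h
    simp only at h
    have hb : b = b' := by simpa using congrFun h 0
    subst hb
    refine Prod.ext (LinearMap.ext fun x => ?_) rfl
    exact add_right_cancel (congrFun h x)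
  have himg : ∀ n : ℕ, {c ∈ NC | {x ∈ T | c x ≠ 0}.ncard = n}
      = (fun p : ((Fin m → F) →ₗ[F] F) × F => (fun x => p.1 x + p.2 : (Fin m → F) → F)) ''
        {p | p.1 ≠ 0 ∧ cnt t₂ t₃ (p.1 u₁) p.2 = n} := by
    intro n
    ext c
    constructor
    · rintro ⟨hc, hcard⟩
      rw [hNC] at hc
      obtain ⟨l, hl, b, rfl⟩ := hc
      exact ⟨(l, b), ⟨hl, by rw [← key l b]; exact hcard⟩, rfl⟩
    · rintro ⟨⟨l, b⟩, ⟨hl, hcnt⟩, rfl⟩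
      exact ⟨by rw [hNC]; exact ⟨l, hl, b, rfl⟩, by rw [key l b]; exact hcnt⟩
  have hcard : ∀ n : ℕ, {c ∈ NC | {x ∈ T | c x ≠ 0}.ncard = n}.ncard
      = Nat.card {p : ((Fin m → F) →ₗ[F] F) × F //
          p.1 ≠ 0 ∧ cnt t₂ t₃ (p.1 u₁) p.2 = n} := by
    intro n
    rw [himg n, Set.ncard_image_of_injective _ he, ← Nat.card_coe_set_eq]
    rfl
  -- transfer along the decomposition equivalence
  have hEiff : ∀ p : ((Fin m → F) →ₗ[F] F) × F,
      p.1 ≠ 0 ↔ (p.1 u₁ ≠ 0 ∨ p.1 - p.1 u₁ • l₀ ≠ 0) := by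
    intro p
    constructor
    · intro hl
      by_contra hcon
      push_neg at hcon
      obtain ⟨hs, hk⟩ := hcon
      rw [hs, zero_smul, sub_zero] at hk
      exact hl hk
    · rintro (h | h) <;> intro h0 <;> rw [h0] at h <;> simp at h
  have htrans : ∀ n : ℕ,
      Nat.card {p : ((Fin m → F) →ₗ[F] F) × F // p.1 ≠ 0 ∧ cnt t₂ t₃ (p.1 u₁) p.2 = n}
        = Nat.card {qq : (F × F) × {l : (Fin m → F) →ₗ[F] F // l u₁ = 0} //
            (qq.1.1 ≠ 0 ∨ qq.2.1 ≠ 0) ∧ cnt t₂ t₃ qq.1.1 qq.1.2 = n} := by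
    intro n
    refine Nat.card_congr ((dualEquiv u₁ l₀ hl₀).subtypeEquiv fun p => ?_)
    constructor
    · rintro ⟨hl, hc⟩
      refine ⟨?_, hc⟩
      rcases (hEiff p).mp hl with h | h
      · exact Or.inl h
      · exact Or.inr h
    · rintro ⟨hor, hc⟩
      refine ⟨(hEiff p).mpr ?_, hc⟩
      rcases hor with h | h
      · exact Or.inl h
      · exact Or.inr h
  set K := {l : (Fin m → F) →ₗ[F] F // l u₁ = 0} with hK
  set Q := Nat.card K with hQdef
  have hq0 : 0 < q := by omega
  have hqQ : q * Q = q ^ m := by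
    have h1 : Nat.card (((Fin m → F) →ₗ[F] F) × F) = Nat.card ((F × F) × K) :=
      Nat.card_congr (dualEquiv u₁ l₀ hl₀)
    rw [Nat.card_prod, Nat.card_prod, Nat.card_prod, cardD, Nat.card_eq_fintype_card] at h1
    rw [← hq] at h1
    -- h1 : q ^ m * q = q * q * Q
    have h2 : q * (q * Q) = q * q ^ m := by
      rw [← mul_assoc, ← h1]
      exact mul_comm _ _
    exact Nat.eq_of_mul_eq_mul_left hq0 h2
  have hQ : Q = q ^ (m - 1) := by
    have : q * Q = q * q ^ (m - 1) := by
      rw [hqQ, ← pow_succ']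
      congr 1
      omega
    exact Nat.eq_of_mul_eq_mul_left hq0 this
  have hQ1 : 1 ≤ Q := by
    rw [hQ]
    exact Nat.one_le_pow _ _ hq0
  have cardF1 : Nat.card {b : F // b ≠ 0} = q - 1 := by
    rw [natCard_subtype_ne (0 : F), Nat.card_eq_fintype_card, ← hq]
  refine ⟨?_, ?_, ?_, ?_, ?_⟩
  -- a₀
  · rw [hcard 0, htrans 0]
    have e1 : Nat.card {qq : (F × F) × K //
        (qq.1.1 ≠ 0 ∨ qq.2.1 ≠ 0) ∧ cnt t₂ t₃ qq.1.1 qq.1.2 = 0}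
        = Nat.card {qq : (F × F) × K // qq.1 = ((0 : F), (0 : F)) ∧ qq.2.1 ≠ 0} := by
      refine Nat.card_congr (Equiv.subtypeEquivRight fun qq => ?_)
      rw [cnt_eq_zero_iff h20 h21 h30 h31 h23']
      constructor
      · rintro ⟨hor, hs, hb⟩
        refine ⟨Prod.ext hs hb, ?_⟩
        rcases hor with h | h
        · exact absurd hs h
        · exact h
      · rintro ⟨hfst, hk⟩
        exact ⟨Or.inr hk, congrArg Prod.fst hfst, congrArg Prod.snd hfst⟩
    rw [e1, Nat.card_congr (fixFstEquiv ((0 : F), (0 : F)) (fun k : K => k.1 ≠ 0)),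
      Nat.card_congr (Equiv.subtypeEquivRight fun k : K =>
        (show k.1 ≠ 0 ↔ k ≠ ⟨0, LinearMap.zero_apply u₁⟩ from
          not_congr ⟨fun h => Subtype.ext h, fun h => congrArg Subtype.val h⟩)),
      natCard_subtype_ne, ← hQdef, hQ]
  -- a₁
  · rw [hcard 1]
    have : IsEmpty {p : ((Fin m → F) →ₗ[F] F) × F //
        p.1 ≠ 0 ∧ cnt t₂ t₃ (p.1 u₁) p.2 = 1} :=
      ⟨fun p => (cnt_ne_one_two h20 h21 h30 h31 h23').1 p.2.2⟩
    exact Nat.card_of_isEmpty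
  -- a₂
  · rw [hcard 2]
    have : IsEmpty {p : ((Fin m → F) →ₗ[F] F) × F //
        p.1 ≠ 0 ∧ cnt t₂ t₃ (p.1 u₁) p.2 = 2} :=
      ⟨fun p => (cnt_ne_one_two h20 h21 h30 h31 h23').2 p.2.2⟩
    exact Nat.card_of_isEmpty
  -- a₃
  · rw [hcard 3, htrans 3]
    have e1 : Nat.card {qq : (F × F) × K //
        (qq.1.1 ≠ 0 ∨ qq.2.1 ≠ 0) ∧ cnt t₂ t₃ qq.1.1 qq.1.2 = 3}
        = Nat.card {qq : (F × F) × K // qq.1.1 ≠ 0 ∧ Bad t₂ t₃ qq.1.1 qq.1.2} := by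
      refine Nat.card_congr (Equiv.subtypeEquivRight fun qq => ?_)
      rw [cnt_eq_three_iff h20 h21 h30 h31 h23']
      constructor
      · rintro ⟨_, hs, hb⟩
        exact ⟨hs, hb⟩
      · rintro ⟨hs, hb⟩
        exact ⟨Or.inl hs, hs, hb⟩
    rw [e1,
      Nat.card_congr (Equiv.prodSubtypeFstEquivSubtypeProd
        (p := fun sb : F × F => sb.1 ≠ 0 ∧ Bad t₂ t₃ sb.1 sb.2)),
      Nat.card_prod, card_bad_pair h20 h21 h30 h31 h23', ← hq, ← hQdef, hQ, mul_assoc]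
  -- a₄
  · rw [hcard 4, htrans 4]
    have e1 : Nat.card {qq : (F × F) × K //
        (qq.1.1 ≠ 0 ∨ qq.2.1 ≠ 0) ∧ cnt t₂ t₃ qq.1.1 qq.1.2 = 4}
        = Nat.card {qq : (F × F) × K //
            ((qq.1.1 = 0 ∧ qq.1.2 ≠ 0) ∧ (qq.2.1 ≠ 0)) ∨
              (qq.1.1 ≠ 0 ∧ ¬ Bad t₂ t₃ qq.1.1 qq.1.2)} := by
      refine Nat.card_congr (Equiv.subtypeEquivRight fun qq => ?_)
      rw [cnt_eq_four_iff h20 h21 h30 h31 h23']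
      constructor
      · rintro ⟨hor, hc⟩
        rcases hc with ⟨hs, hb⟩ | ⟨hs, hb⟩
        · refine Or.inl ⟨⟨hs, hb⟩, ?_⟩
          rcases hor with h | h
          · exact absurd hs h
          · exact h
        · exact Or.inr ⟨hs, hb⟩
      · rintro (⟨⟨hs, hb⟩, hk⟩ | ⟨hs, hb⟩)
        · exact ⟨Or.inr hk, Or.inl ⟨hs, hb⟩⟩
        · exact ⟨Or.inl hs, Or.inr ⟨hs, hb⟩⟩
    rw [e1, Nat.card_congr (splitEquiv (fun sb : F × F => sb.1 = 0 ∧ sb.2 ≠ 0)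
        (fun sb : F × F => sb.1 ≠ 0 ∧ ¬ Bad t₂ t₃ sb.1 sb.2) (fun k : K => k.1 ≠ 0)
        (fun sb hA hB => hB.1 hA.1)),
      Nat.card_sum, Nat.card_prod, Nat.card_prod,
      Nat.card_congr (fixFstEquiv (0 : F) (fun b : F => b ≠ 0)),
      cardF1, card_nbad_pair h20 h21 h30 h31 h23', ← hq]
    have ekk : Nat.card {k : K // k.1 ≠ 0} = Q - 1 := by
      rw [Nat.card_congr (Equiv.subtypeEquivRight fun k : K =>
        (show k.1 ≠ 0 ↔ k ≠ ⟨0, LinearMap.zero_apply u₁⟩ from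
          not_congr ⟨fun h => Subtype.ext h, fun h => congrArg Subtype.val h⟩)),
        natCard_subtype_ne, hQdef]
    rw [ekk, ← hQdef]
    -- (q - 1) * (Q - 1) + (q - 4) * (q - 1) * Q = (q - 1) * (q ^ m - 3 * q ^ (m - 1) - 1)
    rw [← hQ, ← hqQ]
    have h3Q : 3 * Q + 1 ≤ q * Q := by
      have : 4 * Q ≤ q * Q := Nat.mul_le_mul_right Q hq4
      omega
    zify [hQ1, (show 1 ≤ q by omega), hq4, (show 3 * Q ≤ q * Q by omega),
      (show 1 ≤ q * Q - 3 * Q by omega)]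
    ring
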